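/- In the ring of formal power series in t over the symmetric functions, with θ(t) = ∑_{k ≥ 1, k odd} t^k p_k/k, the odd and even parts of E(t) satisfy E_odd(t)·(exp(2θ(t)) + 1) = E_even(t)·(exp(2θ(t)) − 1), where E_odd(t) = ∑_{k≥0} t^{2k+1} e_{2k+1} and E_even(t) = ∑_{k≥0} t^{2k} e_{2k}. Equivalently, E_odd/E_even = tanh(θ(t)). -/

import Mathlib

open Classical

/-- The complete homogeneous symmetric function of degree `i`, as a formal power
series in countably many variables: every monomial of total degree `i` appears
with coefficient `1`. -/
noncomputable def hSym (i : ℕ) : MvPowerSeries ℕ ℚ :=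
  fun d => if (d.sum fun _ k => k) = i then 1 else 0

/-- The elementary symmetric function of degree `i`: every squarefree monomial
of total degree `i` appears with coefficient `1`. -/
noncomputable def eSym (i : ℕ) : MvPowerSeries ℕ ℚ :=
  fun d => if (∀ j ∈ d.support, d j = 1) ∧ d.support.card = i then 1 else 0
/-- The power sum symmetric function `p k`. -/
noncomputable def pSym (k : ℕ) : MvPowerSeries ℕ ℚ :=
  fun d => if ∃ j, d = Finsupp.single j k then 1 else 0

/-- `E_odd(t) = ∑_{k≥0} t^{2k+1} e_{2k+1}`. -/
noncomputable def EoddSer : PowerSeries (MvPowerSeries ℕ ℚ) :=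
  PowerSeries.mk fun n => if Odd n then eSym n else 0

/-- `E_even(t) = ∑_{k≥0} t^{2k} e_{2k}`. -/
noncomputable def EevenSer : PowerSeries (MvPowerSeries ℕ ℚ) :=
  PowerSeries.mk fun n => if Even n then eSym n else 0

/-- The exponential of a power series: for `F` with zero constant term this is
`∑_{n≥0} F^n / n!`, computed coefficientwise. -/
noncomputable def expPS (F : PowerSeries (MvPowerSeries ℕ ℚ)) :
    PowerSeries (MvPowerSeries ℕ ℚ) :=
  PowerSeries.mk fun d =>
    ∑ n ∈ Finset.range (d + 1), ((n.factorial : ℚ)⁻¹) • (PowerSeries.coeff d (F ^ n))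

/-- `θ(t) = ∑_{k odd} t^k p_k / k`. -/
noncomputable def thetaSer : PowerSeries (MvPowerSeries ℕ ℚ) :=
  PowerSeries.mk fun k => if Odd k then ((k : ℚ)⁻¹) • pSym k else 0


-- ===== auxiliary lemmas =====

lemma sub_single_apply_ne (d : ℕ →₀ ℕ) (j k j' : ℕ) (h : j' ≠ j) :
    (d - Finsupp.single j k) j' = d j' := by
  rw [Finsupp.tsub_apply, Finsupp.single_apply, if_neg (fun hc => h hc.symm), Nat.sub_zero]

lemma sub_single_apply_self (d : ℕ →₀ ℕ) (j k : ℕ) :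
    (d - Finsupp.single j k) j = d j - k := by
  rw [Finsupp.tsub_apply, Finsupp.single_apply, if_pos rfl]

lemma supp_sub_all (d : ℕ →₀ ℕ) (j : ℕ) :
    (d - Finsupp.single j (d j)).support = d.support.erase j := by
  ext j'
  rcases eq_or_ne j' j with rfl | h
  · simp [Finsupp.mem_support_iff, sub_single_apply_self]
  · simp [Finsupp.mem_support_iff, sub_single_apply_ne d j _ j' h, Finset.mem_erase, h]

lemma supp_sub_lt (d : ℕ →₀ ℕ) (j k : ℕ) (hk : k < d j) :
    (d - Finsupp.single j k).support = d.support := by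
  ext j'
  rcases eq_or_ne j' j with rfl | h
  · simp only [Finsupp.mem_support_iff, sub_single_apply_self]
    omega
  · simp [Finsupp.mem_support_iff, sub_single_apply_ne d j _ j' h]

lemma coeff_pSym_mul (m : ℕ) (hm : 0 < m) (g : MvPowerSeries ℕ ℚ) (d : ℕ →₀ ℕ) :
    MvPowerSeries.coeff d (pSym m * g) =
      ∑ j ∈ d.support, if m ≤ d j then MvPowerSeries.coeff (d - Finsupp.single j m) g
        else 0 := by
  rw [MvPowerSeries.coeff_mul]
  have h1 : ∀ p ∈ Finset.HasAntidiagonal.antidiagonal d,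
      MvPowerSeries.coeff p.1 (pSym m) * MvPowerSeries.coeff p.2 g =
      ∑ j ∈ d.support,
        if p.1 = Finsupp.single j m then MvPowerSeries.coeff p.2 g else 0 := by
    intro p hp
    rw [Finset.HasAntidiagonal.mem_antidiagonal] at hp
    rw [show MvPowerSeries.coeff p.1 (pSym m)
        = if ∃ j, p.1 = Finsupp.single j m then 1 else 0 from rfl]
    by_cases h : ∃ j, p.1 = Finsupp.single j m
    · obtain ⟨j, hj⟩ := h
      rw [if_pos ⟨j, hj⟩, one_mul]
      have hjs : j ∈ d.support := by
        rw [Finsupp.mem_support_iff]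
        have h2 : p.1 j ≤ d j := by
          rw [← hp]; simp
        rw [hj] at h2; simp at h2; omega
      rw [Finset.sum_eq_single j]
      · rw [if_pos hj]
      · intro b _ hbj
        rw [if_neg]
        intro hc
        rw [hj] at hc
        exact hbj (Finsupp.single_left_injective hm.ne' hc).symm
      · intro h; exact absurd hjs h
    · rw [if_neg h, zero_mul]
      symm; apply Finset.sum_eq_zero
      intro j _; rw [if_neg]; intro hc; exact h ⟨j, hc⟩
  rw [Finset.sum_congr rfl h1, Finset.sum_comm]
  apply Finset.sum_congr rfl
  intro j hj
  by_cases hle : m ≤ d j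
  · rw [if_pos hle]
    have hmem : (Finsupp.single j m, d - Finsupp.single j m) ∈ Finset.HasAntidiagonal.antidiagonal d := by
      rw [Finset.HasAntidiagonal.mem_antidiagonal]
      exact add_tsub_cancel_of_le (Finsupp.single_le_iff.mpr hle)
    rw [Finset.sum_eq_single (Finsupp.single j m, d - Finsupp.single j m)]
    · rw [if_pos rfl]
    · rintro ⟨a, b⟩ hab hne
      rw [Finset.HasAntidiagonal.mem_antidiagonal] at hab
      by_cases ha : a = Finsupp.single j m
      · exfalso; apply hne
        subst ha
        have hb : b = d - Finsupp.single j m := eq_tsub_of_add_eq (by rw [add_comm]; exact hab)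
        rw [hb]
      · rw [if_neg ha]
    · intro h; exact absurd hmem h
  · rw [if_neg hle]
    apply Finset.sum_eq_zero
    rintro ⟨a, b⟩ hab
    rw [Finset.HasAntidiagonal.mem_antidiagonal] at hab
    rw [if_neg]
    intro hc
    apply hle
    replace hc : a = Finsupp.single j m := hc
    have h2 : a j ≤ d j := by rw [← hab]; simp
    rw [hc] at h2; simpa using h2

noncomputable def chi (n : ℕ) (d : ℕ →₀ ℕ) (j i : ℕ) : ℚ :=
  if (i+1 ≤ d j) ∧ (∀ j' ∈ (d - Finsupp.single j (i+1)).support,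
      (d - Finsupp.single j (i+1)) j' = 1)
      ∧ (d - Finsupp.single j (i+1)).support.card = n - i then 1 else 0

lemma chi_gt (n : ℕ) (d : ℕ →₀ ℕ) (j i : ℕ) (h : d j < i + 1) : chi n d j i = 0 := by
  rw [chi, if_neg]; rintro ⟨h1, -⟩; omega

lemma chi_eq (n : ℕ) (d : ℕ →₀ ℕ) (j i : ℕ) (h : i + 1 = d j) :
    chi n d j i = if (∀ j' ∈ d.support, j' ≠ j → d j' = 1)
      ∧ d.support.card - 1 = n - i then 1 else 0 := by
  rw [chi]
  apply if_congr _ rfl rfl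
  have hs : (d - Finsupp.single j (i+1)).support = d.support.erase j := by
    rw [h]; exact supp_sub_all d j
  constructor
  · rintro ⟨-, h2, h3⟩
    refine ⟨fun j' hj' hne => ?_, ?_⟩
    · have hmem : j' ∈ (d - Finsupp.single j (i+1)).support := by
        rw [hs]; exact Finset.mem_erase.mpr ⟨hne, hj'⟩
      have := h2 j' hmem
      rwa [sub_single_apply_ne d j _ j' hne] at this
    · rw [hs] at h3
      by_cases hjmem : j ∈ d.support
      · rw [Finset.card_erase_of_mem hjmem] at h3; exact h3
      · rw [Finset.erase_eq_of_notMem hjmem] at h3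
        rw [Finsupp.mem_support_iff] at hjmem
        push_neg at hjmem
        omega
  · rintro ⟨h1, h2⟩
    have hjmem : j ∈ d.support := by rw [Finsupp.mem_support_iff]; omega
    refine ⟨by omega, fun j' hj' => ?_, ?_⟩
    · rw [hs, Finset.mem_erase] at hj'
      rw [sub_single_apply_ne d j _ j' hj'.1]
      exact h1 j' hj'.2 hj'.1
    · rw [hs, Finset.card_erase_of_mem hjmem]
      exact h2

lemma chi_pred (n : ℕ) (d : ℕ →₀ ℕ) (j i : ℕ) (h : i + 2 = d j) :
    chi n d j i = if (∀ j' ∈ d.support, j' ≠ j → d j' = 1)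
      ∧ d.support.card = n - i then 1 else 0 := by
  rw [chi]
  apply if_congr _ rfl rfl
  have hlt : i + 1 < d j := by omega
  have hs : (d - Finsupp.single j (i+1)).support = d.support := supp_sub_lt d j (i+1) hlt
  have hjv : (d - Finsupp.single j (i+1)) j = 1 := by
    rw [sub_single_apply_self]; omega
  constructor
  · rintro ⟨-, h2, h3⟩
    refine ⟨fun j' hj' hne => ?_, by rw [hs] at h3; exact h3⟩
    have hmem : j' ∈ (d - Finsupp.single j (i+1)).support := by rw [hs]; exact hj'
    have := h2 j' hmem
    rwa [sub_single_apply_ne d j _ j' hne] at this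
  · rintro ⟨h1, h2⟩
    refine ⟨by omega, fun j' hj' => ?_, by rw [hs]; exact h2⟩
    rcases eq_or_ne j' j with rfl | hne
    · exact hjv
    · rw [hs] at hj'
      rw [sub_single_apply_ne d j _ j' hne]
      exact h1 j' hj' hne

lemma chi_small (n : ℕ) (d : ℕ →₀ ℕ) (j i : ℕ) (h : i + 2 < d j) : chi n d j i = 0 := by
  rw [chi, if_neg]
  rintro ⟨-, h2, -⟩
  have hjv : (d - Finsupp.single j (i+1)) j = d j - (i+1) := sub_single_apply_self d j (i+1)
  have hmem : j ∈ (d - Finsupp.single j (i+1)).support := by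
    rw [Finsupp.mem_support_iff, hjv]; omega
  have := h2 j hmem
  omega

lemma key (n : ℕ) (d : ℕ →₀ ℕ) (j : ℕ) (hj : j ∈ d.support) :
    (∑ i ∈ Finset.range (n+1), (-1:ℚ)^i * chi n d j i)
    = if (∀ j' ∈ d.support, d j' = 1) ∧ d.support.card = n+1 then 1 else 0 := by
  have hm : d j ≠ 0 := Finsupp.mem_support_iff.mp hj
  have hcard : 1 ≤ d.support.card := Finset.card_pos.mpr ⟨j, hj⟩
  by_cases hcond : ∀ j' ∈ d.support, j' ≠ j → d j' = 1
  case neg =>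
    push_neg at hcond
    obtain ⟨j', hj's, hj'j, hj'1⟩ := hcond
    have hj'v : d j' ≠ 0 := Finsupp.mem_support_iff.mp hj's
    rw [if_neg, Finset.sum_eq_zero]
    · intro i hi
      rw [chi, if_neg, mul_zero]
      rintro ⟨-, h2, -⟩
      have hmem : j' ∈ (d - Finsupp.single j (i+1)).support := by
        rw [Finsupp.mem_support_iff, sub_single_apply_ne d j _ j' hj'j]; exact hj'v
      have := h2 j' hmem
      rw [sub_single_apply_ne d j _ j' hj'j] at this
      exact hj'1 this
    · rintro ⟨h1, -⟩; exact hj'1 (h1 j' hj's)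
  case pos =>
  rcases Nat.lt_or_ge (d j) 2 with hm2 | hm2
  · -- d j = 1
    have hm1 : d j = 1 := by omega
    have hsf : ∀ j' ∈ d.support, d j' = 1 := by
      intro j' hj'
      rcases eq_or_ne j' j with rfl | h
      · exact hm1
      · exact hcond j' hj' h
    have hterm : ∀ i ∈ Finset.range (n+1), (-1:ℚ)^i * chi n d j i =
        if i = 0 then (if d.support.card = n+1 then (1:ℚ) else 0) else 0 := by
      intro i hi
      rcases Nat.eq_zero_or_pos i with rfl | hi1
      · rw [chi_eq n d j 0 (by omega), pow_zero, one_mul, if_pos rfl]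
        apply if_congr _ rfl rfl
        constructor
        · rintro ⟨-, h2⟩; omega
        · intro h; exact ⟨hcond, by omega⟩
      · rw [chi_gt n d j i (by omega), mul_zero, if_neg (by omega)]
    rw [Finset.sum_congr rfl hterm, Finset.sum_ite_eq' (Finset.range (n+1)) 0,
      if_pos (Finset.mem_range.mpr (by omega))]
    apply if_congr _ rfl rfl
    constructor
    · rintro h; exact ⟨hsf, h⟩
    · rintro ⟨-, h⟩; exact h
  · -- d j ≥ 2
    rw [if_neg (by rintro ⟨h1, -⟩; have := h1 j hj; omega)]
    by_cases hc : d.support.card + d j = n + 2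
    case neg =>
      apply Finset.sum_eq_zero
      intro i hi
      rw [Finset.mem_range] at hi
      rcases Nat.lt_or_ge (d j) (i+1) with h | h
      · rw [chi_gt n d j i h, mul_zero]
      rcases Nat.eq_or_lt_of_le h with heq | h2
      · rw [chi_eq n d j i heq, if_neg (by rintro ⟨-, hcc⟩; omega), mul_zero]
      rcases Nat.eq_or_lt_of_le h2 with heq2 | h3
      · rw [chi_pred n d j i (by omega), if_neg (by rintro ⟨-, hcc⟩; omega), mul_zero]
      · rw [chi_small n d j i (by omega), mul_zero]
    case pos =>
    have hiff : ∀ i ∈ Finset.range (n+1), (-1:ℚ)^i * chi n d j i =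
        (if i = d j - 1 then (-1:ℚ)^i else 0) + (if i = d j - 2 then (-1:ℚ)^i else 0) := by
      intro i hi
      rw [Finset.mem_range] at hi
      rcases Nat.lt_or_ge (d j) (i+1) with h | h
      · rw [chi_gt n d j i h, mul_zero, if_neg (by omega), if_neg (by omega), add_zero]
      rcases Nat.eq_or_lt_of_le h with heq | h2
      · rw [chi_eq n d j i heq, if_pos ⟨hcond, by omega⟩, mul_one,
          if_pos (by omega), if_neg (by omega), add_zero]
      rcases Nat.eq_or_lt_of_le h2 with heq2 | h3
      · rw [chi_pred n d j i (by omega), if_pos ⟨hcond, by omega⟩, mul_one,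
          if_neg (by omega), if_pos (by omega), zero_add]
      · rw [chi_small n d j i (by omega), mul_zero, if_neg (by omega),
          if_neg (by omega), add_zero]
    rw [Finset.sum_congr rfl hiff, Finset.sum_add_distrib,
      Finset.sum_ite_eq' (Finset.range (n+1)) (d j - 1),
      Finset.sum_ite_eq' (Finset.range (n+1)) (d j - 2),
      if_pos (Finset.mem_range.mpr (by omega)), if_pos (Finset.mem_range.mpr (by omega))]
    have h1 : d j - 1 = (d j - 2) + 1 := by omega
    rw [h1, pow_succ]
    ring

lemma newtonE (n : ℕ) :
    ((n : ℚ) + 1) • eSym (n+1) =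
      ∑ i ∈ Finset.range (n+1), ((-1:ℚ)^i) • (pSym (i+1) * eSym (n-i)) := by
  apply MvPowerSeries.ext
  intro d
  rw [map_sum, MvPowerSeries.coeff_smul]
  have hco : ∀ i ∈ Finset.range (n+1),
      MvPowerSeries.coeff d (((-1:ℚ)^i) • (pSym (i+1) * eSym (n-i))) =
      (-1:ℚ)^i * ∑ j ∈ d.support, chi n d j i := by
    intro i _
    rw [MvPowerSeries.coeff_smul, coeff_pSym_mul (i+1) (by omega)]
    congr 1
    apply Finset.sum_congr rfl
    intro j _
    rw [show MvPowerSeries.coeff (d - Finsupp.single j (i+1)) (eSym (n-i)) =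
      if (∀ j' ∈ (d - Finsupp.single j (i+1)).support, (d - Finsupp.single j (i+1)) j' = 1)
        ∧ (d - Finsupp.single j (i+1)).support.card = n - i then 1 else 0 from rfl, chi]
    split_ifs <;> tauto
  rw [Finset.sum_congr rfl hco]
  have hswap : ∑ i ∈ Finset.range (n+1), ((-1:ℚ)^i * ∑ j ∈ d.support, chi n d j i)
      = ∑ j ∈ d.support, ∑ i ∈ Finset.range (n+1), (-1:ℚ)^i * chi n d j i := by
    rw [Finset.sum_congr rfl fun i _ => Finset.mul_sum _ _ _, Finset.sum_comm]
  rw [hswap, Finset.sum_congr rfl fun j hj => key n d j hj, Finset.sum_const,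
    show MvPowerSeries.coeff d (eSym (n+1)) =
      if (∀ j' ∈ d.support, d j' = 1) ∧ d.support.card = n+1 then 1 else 0 from rfl]
  by_cases hC : (∀ j' ∈ d.support, d j' = 1) ∧ d.support.card = n+1
  · rw [if_pos hC, nsmul_eq_mul, hC.2, mul_one, mul_one]
    push_cast
    ring
  · rw [if_neg hC, mul_zero, smul_zero]

namespace TanhAux

abbrev R := MvPowerSeries ℕ ℚ

open PowerSeries

noncomputable def ESer : PowerSeries R := PowerSeries.mk fun n => eSym n
noncomputable def EbarSer : PowerSeries R := PowerSeries.mk fun n => ((-1:ℚ)^n) • eSym n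
noncomputable def PSer : PowerSeries R := PowerSeries.mk fun k => ((-1:ℚ)^k) • pSym (k+1)
noncomputable def QSer : PowerSeries R := PowerSeries.mk fun k => -(pSym (k+1))
noncomputable def TSer : PowerSeries R :=
  PowerSeries.mk fun k => if Odd (k+1) then (2:ℚ) • pSym (k+1) else 0

lemma mul_cast_succ (x : R) (n : ℕ) : x * ((n : R) + 1) = ((n:ℚ)+1) • x := by
  rw [mul_comm, Algebra.smul_def]
  congr 1
  rw [map_add, map_one, map_natCast]

lemma hT : d⁄dX R (2 • thetaSer) = TSer := by
  apply PowerSeries.ext; intro k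
  rw [PowerSeries.coeff_derivative, TSer, PowerSeries.coeff_mk, mul_cast_succ]
  rw [show (PowerSeries.coeff (k+1)) (2 • thetaSer) = 2 • (PowerSeries.coeff (k+1)) thetaSer
    from map_nsmul _ _ _]
  rw [thetaSer, PowerSeries.coeff_mk]
  by_cases h : Odd (k+1)
  · rw [if_pos h, if_pos h, smul_comm, smul_smul]
    have h1 : ((k:ℚ)+1) * (((k+1 : ℕ) : ℚ))⁻¹ = 1 := by
      push_cast
      apply mul_inv_cancel₀
      positivity
    rw [h1, one_smul, ← Nat.cast_smul_eq_nsmul ℚ 2 (pSym (k+1))]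
    norm_num
  · rw [if_neg h, if_neg h, smul_zero, smul_zero]

lemma hPQT : TSer + QSer = PSer := by
  apply PowerSeries.ext; intro k
  rw [map_add, TSer, QSer, PSer, PowerSeries.coeff_mk, PowerSeries.coeff_mk,
    PowerSeries.coeff_mk]
  rcases Nat.even_or_odd k with he | ho
  · rw [if_pos (by rcases he with ⟨m, hm⟩; exact ⟨m, by omega⟩), he.neg_one_pow, one_smul]
    module
  · rw [if_neg (by rintro ⟨m, hm⟩; rcases ho with ⟨l, hl⟩; omega), ho.neg_one_pow, zero_add,
      neg_one_smul]

lemma hE : d⁄dX R ESer = PSer * ESer := by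
  apply PowerSeries.ext; intro n
  rw [PowerSeries.coeff_derivative, ESer, PowerSeries.coeff_mk, mul_cast_succ, newtonE,
    PowerSeries.coeff_mul, Finset.Nat.sum_antidiagonal_eq_sum_range_succ_mk]
  apply Finset.sum_congr rfl
  intro i _
  rw [PSer, PowerSeries.coeff_mk, PowerSeries.coeff_mk, smul_mul_assoc]

lemma hEbar : d⁄dX R EbarSer = QSer * EbarSer := by
  apply PowerSeries.ext; intro n
  rw [PowerSeries.coeff_derivative, EbarSer, PowerSeries.coeff_mk, mul_cast_succ]
  rw [smul_comm, newtonE, Finset.smul_sum]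
  rw [PowerSeries.coeff_mul, Finset.Nat.sum_antidiagonal_eq_sum_range_succ_mk]
  apply Finset.sum_congr rfl
  intro i hi
  rw [Finset.mem_range] at hi
  rw [QSer, PowerSeries.coeff_mk, PowerSeries.coeff_mk]
  rw [smul_smul]
  have hsign : (-1:ℚ)^(n+1) * (-1)^i = -(-1:ℚ)^(n-i) := by
    have h : n+1 = (n-i+1) + i := by omega
    rw [h, pow_add]
    have h2 : (-1:ℚ)^i * (-1)^i = 1 := by
      rw [← pow_add]
      exact Even.neg_one_pow ⟨i, rfl⟩
    rw [mul_assoc, h2, mul_one, pow_succ]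
    ring
  rw [hsign, neg_smul, neg_mul, mul_smul_comm]

lemma coeff_pow_eq_zero {G : PowerSeries R} (hG : PowerSeries.constantCoeff G = 0) :
    ∀ m k, k < m → PowerSeries.coeff k (G ^ m) = 0 := by
  intro m
  induction m with
  | zero => intro k hk; exact absurd hk (Nat.not_lt_zero k)
  | succ m ih =>
    intro k hk
    rw [pow_succ, PowerSeries.coeff_mul]
    apply Finset.sum_eq_zero
    rintro ⟨a, b⟩ hab
    rw [Finset.HasAntidiagonal.mem_antidiagonal] at hab
    simp only at hab ⊢
    rcases Nat.lt_or_ge a m with h | h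
    · rw [ih a h, zero_mul]
    · have hb : b = 0 := by omega
      subst hb
      rw [PowerSeries.coeff_zero_eq_constantCoeff, hG, mul_zero]

lemma deriv_expPS (G : PowerSeries R) (hG : PowerSeries.constantCoeff G = 0) :
    d⁄dX R (expPS G) = (d⁄dX R G) * expPS G := by
  apply PowerSeries.ext; intro n
  rw [PowerSeries.coeff_derivative]
  simp only [expPS, PowerSeries.coeff_mk]
  rw [Finset.sum_mul, Finset.sum_range_succ']
  have h0 : ((Nat.factorial 0 : ℚ)⁻¹ • (PowerSeries.coeff (n+1)) (G ^ 0)) * ((n:R) + 1) = 0 := by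
    rw [pow_zero, PowerSeries.coeff_one, if_neg (by omega), smul_zero, zero_mul]
  rw [h0, add_zero]
  have hterm : ∀ m, (((m+1).factorial : ℚ)⁻¹ • (PowerSeries.coeff (n+1)) (G ^ (m+1)))
      * ((n:R) + 1) = ((m.factorial : ℚ)⁻¹) • (PowerSeries.coeff n ((d⁄dX R G) * G ^ m)) := by
    intro m
    rw [smul_mul_assoc, ← PowerSeries.coeff_derivative, Derivation.leibniz_pow,
      show (G ^ (m+1-1)) • (d⁄dX R G) = G ^ m * d⁄dX R G from by
        rw [smul_eq_mul, Nat.add_sub_cancel],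
      map_nsmul, ← Nat.cast_smul_eq_nsmul ℚ (m+1), smul_smul, mul_comm (G ^ m)]
    congr 1
    rw [Nat.factorial_succ]
    have h1 : (m.factorial : ℚ) ≠ 0 := by positivity
    push_cast
    field_simp
  rw [Finset.sum_congr rfl fun m _ => hterm m]
  rw [PowerSeries.coeff_mul]
  simp only [PowerSeries.coeff_mk]
  have hext : ∀ p ∈ Finset.HasAntidiagonal.antidiagonal n,
      (PowerSeries.coeff p.1) (d⁄dX R G) *
        (∑ m ∈ Finset.range (p.2 + 1), ((m.factorial : ℚ)⁻¹) • (PowerSeries.coeff p.2) (G ^ m)) =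
      ∑ m ∈ Finset.range (n+1), ((m.factorial : ℚ)⁻¹) •
        ((PowerSeries.coeff p.1) (d⁄dX R G) * (PowerSeries.coeff p.2) (G ^ m)) := by
    intro p hp
    rw [Finset.HasAntidiagonal.mem_antidiagonal] at hp
    rw [Finset.sum_subset (Finset.range_subset_range.mpr (by omega : p.2 + 1 ≤ n + 1))
      (fun m _ hm => by
        rw [Finset.mem_range] at hm
        rw [coeff_pow_eq_zero hG m p.2 (by omega), smul_zero]),
      Finset.mul_sum]
    apply Finset.sum_congr rfl
    intro m _
    rw [mul_smul_comm]
  rw [Finset.sum_congr rfl hext, Finset.sum_comm]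
  apply Finset.sum_congr rfl
  intro m _
  rw [PowerSeries.coeff_mul, Finset.smul_sum]

lemma uniq (P A B : PowerSeries R) (hA : d⁄dX R A = P * A) (hB : d⁄dX R B = P * B)
    (h0 : PowerSeries.coeff 0 A = PowerSeries.coeff 0 B) : A = B := by
  apply PowerSeries.ext
  intro n
  induction n using Nat.strong_induction_on with
  | _ n ih =>
    match n with
    | 0 => exact h0
    | (n+1) =>
      have hcA : (PowerSeries.coeff (n+1)) A * ((n:R)+1) = PowerSeries.coeff n (P * A) := by
        rw [← hA, PowerSeries.coeff_derivative]
      have hcB : (PowerSeries.coeff (n+1)) B * ((n:R)+1) = PowerSeries.coeff n (P * B) := by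
        rw [← hB, PowerSeries.coeff_derivative]
      rw [mul_cast_succ] at hcA hcB
      have heq : PowerSeries.coeff n (P * A) = PowerSeries.coeff n (P * B) := by
        rw [PowerSeries.coeff_mul, PowerSeries.coeff_mul]
        apply Finset.sum_congr rfl
        rintro ⟨a, b⟩ hab
        rw [Finset.HasAntidiagonal.mem_antidiagonal] at hab
        simp only
        rw [ih b (by omega)]
      have := hcA.trans (heq.trans hcB.symm)
      have hne : ((n:ℚ)+1) ≠ 0 := by positivity
      exact smul_right_injective R hne this


lemma eSym_zero : eSym 0 = (1 : R) := by
  apply MvPowerSeries.ext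
  intro d
  rw [show MvPowerSeries.coeff d (eSym 0) =
    if (∀ j ∈ d.support, d j = 1) ∧ d.support.card = 0 then 1 else 0 from rfl,
    MvPowerSeries.coeff_one]
  by_cases h : d = 0
  · subst h
    rw [if_pos ⟨by simp, by simp⟩, if_pos rfl]
  · rw [if_neg, if_neg h]
    rintro ⟨-, h2⟩
    rw [Finset.card_eq_zero, Finsupp.support_eq_empty] at h2
    exact h h2

lemma hG0 : PowerSeries.constantCoeff (2 • thetaSer) = 0 := by
  rw [map_nsmul]
  rw [show PowerSeries.constantCoeff thetaSer = PowerSeries.coeff 0 thetaSer from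
    (PowerSeries.coeff_zero_eq_constantCoeff_apply _).symm, thetaSer, PowerSeries.coeff_mk,
    if_neg (by simp), smul_zero]

lemma expPS_const (G : PowerSeries R) : PowerSeries.coeff 0 (expPS G) = 1 := by
  simp only [expPS, PowerSeries.coeff_mk]
  rw [Finset.sum_range_one, pow_zero, Nat.factorial_zero]
  norm_num

lemma hmain : expPS (2 • thetaSer) * EbarSer = ESer := by
  apply uniq PSer
  · rw [Derivation.leibniz, hEbar, deriv_expPS _ hG0, hT, smul_eq_mul, smul_eq_mul, ← hPQT]
    ring
  · exact hE
  · rw [show (PowerSeries.coeff 0) (expPS (2 • thetaSer) * EbarSer) =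
        (PowerSeries.coeff 0) (expPS (2 • thetaSer)) * (PowerSeries.coeff 0) EbarSer from by
      simp [PowerSeries.coeff_mul]]
    rw [expPS_const, EbarSer, ESer, PowerSeries.coeff_mk, PowerSeries.coeff_mk, pow_zero,
      one_smul, one_mul]

lemma hEsum : ESer = EoddSer + EevenSer := by
  apply PowerSeries.ext; intro n
  rw [map_add, ESer, EoddSer, EevenSer, PowerSeries.coeff_mk, PowerSeries.coeff_mk,
    PowerSeries.coeff_mk]
  rcases Nat.even_or_odd n with he | ho
  · rw [if_pos he, if_neg (by simpa using he), zero_add]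
  · rw [if_pos ho, if_neg (by simpa using ho), add_zero]

lemma hEbarsum : EbarSer = EevenSer - EoddSer := by
  apply PowerSeries.ext; intro n
  rw [map_sub, EbarSer, EoddSer, EevenSer, PowerSeries.coeff_mk, PowerSeries.coeff_mk,
    PowerSeries.coeff_mk]
  rcases Nat.even_or_odd n with he | ho
  · rw [if_pos he, if_neg (by simpa using he), he.neg_one_pow, one_smul, sub_zero]
  · rw [if_pos ho, if_neg (by simpa using ho), ho.neg_one_pow, neg_one_smul, zero_sub]

end TanhAux

/-- `E_odd(t)·(exp(2θ(t)) + 1) = E_even(t)·(exp(2θ(t)) − 1)`, i.e.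
`E_odd/E_even = tanh(θ(t))`. -/
theorem Eodd_Eeven_tanh :
    EoddSer * (expPS (2 • thetaSer) + 1) = EevenSer * (expPS (2 • thetaSer) - 1) := by
  have h := TanhAux.hmain
  rw [TanhAux.hEsum, TanhAux.hEbarsum] at h
  linear_combination -h
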